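/- For any 0 < λ < 1, the power series f(x) = Σ_{i≥0} λⁱxⁱ converges absolutely on [0,1], and the set of nonempty compact sets K ⊆ [0,1] for which f(K) = Σᵢ λⁱ·K^{⊙i} has empty interior is meager in 𝒦([0,1]). -/
import Mathlib


open Pointwise

/-- The space of nonempty compact subsets of `[0,1]`, with the Hausdorff metric topology. -/
def KIcc : Type := {K : TopologicalSpace.NonemptyCompacts ℝ // (K : Set ℝ) ⊆ Set.Icc 0 1}

instance : TopologicalSpace KIcc := instTopologicalSpaceSubtype

open Metric Filter TopologicalSpace

lemma pow_subset_unit {K : Set ℝ} (hK : K ⊆ Set.Icc 0 1) :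
    ∀ i : ℕ, K ^ i ⊆ Set.Icc 0 1
  | 0 => by
      rw [pow_zero]
      intro x hx
      rw [Set.mem_one] at hx
      simp [hx]
  | (i+1) => by
      rw [pow_succ]
      rintro x ⟨y, hy, z, hz, rfl⟩
      have hy' := pow_subset_unit hK i hy
      have hz' := hK hz
      exact ⟨mul_nonneg hy'.1 hz'.1, mul_le_one₀ hy'.2 hz'.1 hz'.2⟩

lemma sum_subset_Icc {K : Set ℝ} (hK : K ⊆ Set.Icc 0 1) {lam : ℝ}
    (h0 : 0 ≤ lam) (h1 : lam ≤ 1) :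
    ∀ n : ℕ, (∑ i ∈ Finset.range n, lam ^ i • K ^ i) ⊆ Set.Icc 0 (n : ℝ)
  | 0 => by
      intro x hx
      simp only [Finset.range_zero, Finset.sum_empty] at hx
      rw [Set.mem_zero] at hx
      simp [hx]
  | (n+1) => by
      rw [Finset.sum_range_succ]
      rintro x ⟨y, hy, z, hz, rfl⟩
      have hy' := sum_subset_Icc hK h0 h1 n hy
      obtain ⟨w, hw, rfl⟩ := hz
      have hw' := pow_subset_unit hK n hw
      have hln : 0 ≤ lam ^ n := pow_nonneg h0 n
      have hln1 : lam ^ n ≤ 1 := pow_le_one₀ h0 h1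
      simp only [smul_eq_mul, Set.mem_Icc] at *
      push_cast
      constructor
      · nlinarith [hy'.1, hw'.1]
      · nlinarith [hy'.2, hw'.2, hw'.1]

set_option maxHeartbeats 1000000 in
lemma core (lam : ℝ) (h0 : 0 < lam) (h1 : lam < 1)
    (K : Set ℝ) (hK : K ⊆ Set.Icc 0 1)
    (a b δ : ℝ) (ha : 0 < a) (hδ : 0 < δ) (hab : 4*δ < b - a)
    (hkey : 2*δ ≤ lam * (b - 2*δ) * (b - a - 4*δ))
    (hdense : ∀ x ∈ Set.Icc a b, ∃ k ∈ K, dist x k ≤ δ)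
    (F : Set ℝ) (hFc : IsCompact F) (hFne : F.Nonempty)
    (hT : Tendsto (fun n => hausdorffDist (∑ i ∈ Finset.range n, lam ^ i • K ^ i) F)
      atTop (nhds 0)) :
    (interior F).Nonempty := by
  have hab' : a < b := by linarith
  obtain ⟨α, hαK, hαd⟩ := hdense (a+δ) ⟨by linarith, by linarith⟩
  obtain ⟨β, hβK, hβd⟩ := hdense (b-δ) ⟨by linarith, by linarith⟩
  rw [Real.dist_eq, abs_le] at hαd hβd
  have hα1 : a ≤ α := by linarith [hαd.2]
  have hα2 : α ≤ a + 2*δ := by linarith [hαd.1]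
  have hβ1 : b - 2*δ ≤ β := by linarith [hβd.2]
  have hβ2 : β ≤ b := by linarith [hβd.1]
  have hαpos : 0 < α := lt_of_lt_of_le ha hα1
  have hβpos : 0 < β := by linarith
  have hαβ : α < β := by linarith
  have hβle1 : β ≤ 1 := (hK hβK).2
  have hq0 : 0 < lam * β := mul_pos h0 hβpos
  have hq1 : lam * β < 1 := lt_of_le_of_lt (by nlinarith) h1
  have h1q : 0 < 1 - lam * β := by linarith
  have hkey2 : 2*δ ≤ lam * β * (β - α) := by
    have h2 : lam * (b - 2*δ) * (b - a - 4*δ) ≤ lam * β * (β - α) := by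
      apply mul_le_mul
      · exact mul_le_mul le_rfl hβ1 (by linarith) h0.le
      · linarith
      · linarith
      · positivity
    linarith
  set Td : ℕ → ℝ := fun n => (lam*β)^n / (1-lam*β) with hTddef
  set Tc : ℕ → ℝ := fun n => α * (lam*β)^n / (β*(1-lam*β)) with hTcdef
  have hTd0 : ∀ n, 0 ≤ Td n := fun n =>
    div_nonneg (pow_nonneg hq0.le n) h1q.le
  have hTc0 : ∀ n, 0 ≤ Tc n := fun n =>
    div_nonneg (mul_nonneg hαpos.le (pow_nonneg hq0.le n)) (mul_pos hβpos h1q).le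
  have hTcTd : ∀ n, Tc n ≤ Td n := by
    intro n
    simp only [hTddef, hTcdef]
    rw [div_le_div_iff₀ (mul_pos hβpos h1q) h1q]
    have hXn := pow_nonneg hq0.le n
    nlinarith [mul_nonneg (mul_nonneg hXn h1q.le) (sub_nonneg.mpr hαβ.le)]
  -- main greedy induction
  have key : ∀ t : ℝ, 1 + Tc 1 ≤ t → t ≤ 1 + Td 1 → ∀ n : ℕ,
      ∃ y ∈ ∑ i ∈ Finset.range (n+1), lam ^ i • K ^ i,
        Tc (n+1) ≤ t - y ∧ t - y ≤ Td (n+1) := by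
    intro t ht1 ht2 n
    induction n with
    | zero =>
        refine ⟨1, ?_, by linarith, by linarith⟩
        simp
    | succ n ih =>
        obtain ⟨y, hy, hl, hr⟩ := ih
        set m : ℝ := lam^(n+1) * β^n with hm
        have hmpos : 0 < m := by positivity
        have hm' : m = (lam*β)^(n+1)/β := by
          rw [eq_div_iff hβpos.ne']
          simp only [hm]; rw [mul_pow, pow_succ]; ring
        have hidT : Td (n+1) = m*β + Td (n+2) := by
          simp only [hTddef]; rw [hm']; field_simp; ring
        have hidC : Tc (n+1) = m*α + Tc (n+2) := by
          simp only [hTcdef]; rw [hm']; field_simp; ring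
        have hidD : Td (n+2) - Tc (n+2) = m * (lam*β*(β-α)) / (1-lam*β) := by
          simp only [hTddef, hTcdef]; rw [hm']; field_simp; ring
        have hmem : ∀ k ∈ K, y + lam^(n+1) • (β^n * k) ∈
            ∑ i ∈ Finset.range (n+2), lam ^ i • K ^ i := by
          intro k hkK
          rw [Finset.sum_range_succ]
          refine Set.add_mem_add hy (Set.smul_mem_smul_set ?_)
          rw [pow_succ]
          exact Set.mul_mem_mul (Set.pow_mem_pow hβK) hkK
        have hval : ∀ k : ℝ, lam^(n+1) • (β^n * k) = m * k := by
          intro k; simp only [smul_eq_mul, hm]; ring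
        by_cases hA : Tc (n+2) ≤ (t - y) - m * β
        · refine ⟨y + lam^(n+1) • (β^n * β), hmem β hβK, ?_, ?_⟩
          · rw [hval]; linarith
          · rw [hval]; linarith
        · by_cases hB : (t - y) - m * α ≤ Td (n+2)
          · refine ⟨y + lam^(n+1) • (β^n * α), hmem α hαK, ?_, ?_⟩
            · rw [hval]; linarith
            · rw [hval]; linarith
          · push_neg at hA hB
            set G : ℝ := (2*(t-y) - Td (n+2) - Tc (n+2))/2 with hG
            have hTcTd2 := hTcTd (n+2)
            have hG1 : α * m < G := by nlinarith
            have hG2 : G < β * m := by nlinarith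
            have hμab : G/m ∈ Set.Icc a b := by
              constructor
              · have : α < G/m := (lt_div_iff₀ hmpos).mpr hG1
                linarith
              · have : G/m < β := (div_lt_iff₀ hmpos).mpr hG2
                linarith
            obtain ⟨k, hkK, hkd⟩ := hdense (G/m) hμab
            rw [Real.dist_eq, abs_le] at hkd
            have hmG : m * (G/m) = G := by field_simp
            have hk1 : G - m*δ ≤ m*k := by nlinarith [hkd.2]
            have hk2 : m*k ≤ G + m*δ := by nlinarith [hkd.1]
            have hH : m*δ ≤ (Td (n+2) - Tc (n+2))/2 := by
              have hX : 0 ≤ lam*β*(β-α) := by nlinarith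
              have s1 : m * (2*δ) ≤ m * (lam*β*(β-α)) :=
                mul_le_mul_of_nonneg_left hkey2 hmpos.le
              have s2 : m * (lam*β*(β-α)) ≤ m * (lam*β*(β-α)) / (1-lam*β) := by
                rw [le_div_iff₀ h1q]
                nlinarith [mul_nonneg hmpos.le hX]
              nlinarith [hidD]
            refine ⟨y + lam^(n+1) • (β^n * k), hmem k hkK, ?_, ?_⟩
            · rw [hval]; linarith
            · rw [hval]; linarith
  -- limits
  have hTdlim : Tendsto (fun n : ℕ => Td (n+1)) atTop (nhds 0) := by
    have h := (tendsto_pow_atTop_nhds_zero_of_lt_one hq0.le hq1).div_const (1-lam*β)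
    rw [zero_div] at h
    exact h.comp (tendsto_add_atTop_nat 1)
  have hCD : 1 + Tc 1 < 1 + Td 1 := by
    have : Tc 1 < Td 1 := by
      simp only [hTddef, hTcdef]
      rw [div_lt_div_iff₀ (mul_pos hβpos h1q) h1q]
      nlinarith
    linarith
  have hsub : Set.Icc (1 + Tc 1) (1 + Td 1) ⊆ F := by
    intro t ht
    have hmain : ∀ ε : ℝ, 0 < ε → infDist t F ≤ ε := by
      intro ε hε
      have ev1 : ∀ᶠ n : ℕ in atTop, Td (n+1) < ε/2 :=
        hTdlim.eventually_lt_const (half_pos hε)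
      have ev2 : ∀ᶠ n : ℕ in atTop,
          hausdorffDist (∑ i ∈ Finset.range (n+1), lam ^ i • K ^ i) F < ε/2 :=
        (hT.comp (tendsto_add_atTop_nat 1)).eventually_lt_const (half_pos hε)
      obtain ⟨n, hn1, hn2⟩ := (ev1.and ev2).exists
      obtain ⟨y, hy, hl, hr⟩ := key t ht.1 ht.2 n
      have hSne : (∑ i ∈ Finset.range (n+1), lam ^ i • K ^ i).Nonempty := ⟨y, hy⟩
      have hSbd : Bornology.IsBounded (∑ i ∈ Finset.range (n+1), lam ^ i • K ^ i) :=
        (Metric.isBounded_Icc (0:ℝ) ((n+1 : ℕ) : ℝ)).subset (sum_subset_Icc hK h0.le h1.le (n+1))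
      have hfin : EMetric.hausdorffEdist (∑ i ∈ Finset.range (n+1), lam ^ i • K ^ i) F ≠ ⊤ :=
        hausdorffEdist_ne_top_of_nonempty_of_bounded hSne hFne hSbd hFc.isBounded
      have i1 : infDist t F ≤ infDist t (∑ i ∈ Finset.range (n+1), lam ^ i • K ^ i) +
          hausdorffDist (∑ i ∈ Finset.range (n+1), lam ^ i • K ^ i) F :=
        infDist_le_infDist_add_hausdorffDist hfin
      have i2 : infDist t (∑ i ∈ Finset.range (n+1), lam ^ i • K ^ i) ≤ dist t y :=
        infDist_le_dist_of_mem hy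
      have i3 : dist t y ≤ Td (n+1) := by
        rw [Real.dist_eq, abs_le]
        exact ⟨by linarith [hTc0 (n+1)], hr⟩
      linarith
    have h0' : infDist t F ≤ 0 := by
      by_contra hcon
      push_neg at hcon
      have := hmain (infDist t F / 2) (by linarith)
      linarith
    have : infDist t F = 0 := le_antisymm h0' infDist_nonneg
    exact (hFc.isClosed.mem_iff_infDist_zero hFne).mpr this
  obtain ⟨x, hx⟩ := Set.nonempty_Ioo.mpr hCD
  exact ⟨x, interior_mono hsub ((interior_Icc (a := 1 + Tc 1) (b := 1 + Td 1)).symm ▸ hx)⟩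

def Vset (lam : ℝ) : Set (NonemptyCompacts ℝ) :=
  {L | ∃ a b δ δ' : ℝ, 0 < a ∧ 0 < δ ∧ 4*δ < b - a ∧
      2*δ ≤ lam * (b - 2*δ) * (b - a - 4*δ) ∧ 0 ≤ δ' ∧ δ' < δ ∧
      ∀ x ∈ Set.Icc a b, infDist x (L : Set ℝ) ≤ δ'}

lemma Vopen (lam : ℝ) : IsOpen (Vset lam) := by
  rw [Metric.isOpen_iff]
  rintro L ⟨a, b, δ, δ', ha, hδ, hab, hkey, hδ'0, hδ', hd⟩
  refine ⟨(δ - δ')/2, by linarith, ?_⟩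
  intro L' hL'
  rw [Metric.mem_ball] at hL'
  refine ⟨a, b, δ, δ' + (δ - δ')/2, ha, hδ, hab, hkey, by linarith, by linarith, ?_⟩
  intro x hx
  have hfin : EMetric.hausdorffEdist (L : Set ℝ) (L' : Set ℝ) ≠ ⊤ :=
    hausdorffEdist_ne_top_of_nonempty_of_bounded L.nonempty L'.nonempty
      L.isCompact.isBounded L'.isCompact.isBounded
  have h1 : infDist x (L' : Set ℝ) ≤ infDist x (L : Set ℝ) +
      hausdorffDist (L : Set ℝ) (L' : Set ℝ) :=
    infDist_le_infDist_add_hausdorffDist hfin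
  have h2 : hausdorffDist (L : Set ℝ) (L' : Set ℝ) = dist L' L := by
    rw [NonemptyCompacts.dist_eq, hausdorffDist_comm]
  have := hd x hx
  linarith

lemma net_exists (a b h : ℝ) (hh : 0 < h) (hab : a ≤ b) :
    ∃ N : Set ℝ, N.Finite ∧ N.Nonempty ∧ N ⊆ Set.Icc a b ∧
      ∀ x ∈ Set.Icc a b, ∃ p ∈ N, dist x p ≤ h := by
  refine ⟨(fun j : ℕ => min (a + j*h) b) '' Set.Iic ⌈(b-a)/h⌉₊,
    (Set.finite_Iic _).image _,
    ⟨min (a + (0:ℕ)*h) b, Set.mem_image_of_mem _ (Set.mem_Iic.mpr (Nat.zero_le _))⟩, ?_, ?_⟩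
  · rintro p ⟨j, _, rfl⟩
    constructor
    · apply le_min ?_ hab
      have : (0:ℝ) ≤ (j:ℝ)*h := by positivity
      linarith
    · exact min_le_right _ _
  · intro x hx
    set j := ⌊(x - a)/h⌋₊ with hjdef
    have hx0 : 0 ≤ (x-a)/h := div_nonneg (by linarith [hx.1]) hh.le
    have h1 : (j:ℝ) ≤ (x-a)/h := Nat.floor_le hx0
    have h2 : (x-a)/h < (j:ℝ) + 1 := Nat.lt_floor_add_one _
    have hjh : (j:ℝ)*h ≤ x - a := by
      rw [← le_div_iff₀ hh]; exact h1
    have hjh2 : x - a < ((j:ℝ)+1)*h := by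
      rw [← div_lt_iff₀ hh]; exact h2
    have hjM : j ∈ Set.Iic ⌈(b-a)/h⌉₊ := by
      rw [Set.mem_Iic]
      have hle : (x-a)/h ≤ (b-a)/h := by gcongr; exact hx.2
      calc j ≤ ⌊(b-a)/h⌋₊ := Nat.floor_mono hle
      _ ≤ ⌈(b-a)/h⌉₊ := Nat.floor_le_ceil _
    refine ⟨min (a + (j:ℝ)*h) b, Set.mem_image_of_mem _ hjM, ?_⟩
    have hmin : min (a + (j:ℝ)*h) b = a + (j:ℝ)*h := min_eq_left (by linarith [hx.2])
    rw [hmin, Real.dist_eq, abs_le]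
    constructor <;> linarith

lemma dense_step (lam : ℝ) (h0 : 0 < lam) (h1 : lam < 1)
    (L : NonemptyCompacts ℝ) (hL : (L : Set ℝ) ⊆ Set.Icc 0 1)
    (ε : ℝ) (hε : 0 < ε) :
    ∃ L' : NonemptyCompacts ℝ, (L' : Set ℝ) ⊆ Set.Icc 0 1 ∧
      dist L' L < ε ∧ L' ∈ Vset lam := by
  set ρ : ℝ := min (ε/4) (1/4) with hρdef
  have hρ0 : 0 < ρ := lt_min (by linarith) (by norm_num)
  have hρε : ρ ≤ ε/4 := min_le_left _ _
  have hρ4 : ρ ≤ 1/4 := min_le_right _ _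
  set b0 : ℝ := sSup (L : Set ℝ) with hb0def
  have hb0mem : b0 ∈ (L : Set ℝ) := L.isCompact.sSup_mem L.nonempty
  have hb001 : b0 ∈ Set.Icc 0 1 := hL hb0mem
  set b : ℝ := max b0 (2*ρ) with hbdef
  set aa : ℝ := b - ρ with haadef
  have hb1 : b ≤ 1 := max_le hb001.2 (by linarith)
  have hbb0 : b0 ≤ b := le_max_left _ _
  have hb2ρ : 2*ρ ≤ b := le_max_right _ _
  have haa0 : 0 < aa := by simp only [haadef]; linarith
  have hbb02 : b ≤ b0 + 2*ρ := max_le (by linarith) (by linarith [hb001.1])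
  set δ : ℝ := lam * ρ^2 / 100 with hδdef
  have hδ0 : 0 < δ := by positivity
  have hρ1 : lam * ρ ≤ 1 := by nlinarith
  have hδsmall : 8*δ ≤ ρ := by
    simp only [hδdef]
    nlinarith
  have hc1 : 4*δ < b - aa := by simp only [haadef]; linarith
  have hc2 : 2*δ ≤ lam * (b - 2*δ) * (b - aa - 4*δ) := by
    have p1 : ρ ≤ b - 2*δ := by linarith
    have p2 : ρ/2 ≤ b - aa - 4*δ := by simp only [haadef]; linarith
    have q1 : lam*ρ*(ρ/2) ≤ lam*(b - 2*δ)*(b - aa - 4*δ) := by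
      apply mul_le_mul (mul_le_mul le_rfl p1 hρ0.le h0.le) p2 (by linarith)
        (mul_nonneg h0.le (by linarith))
    have q2 : 2*δ ≤ lam*ρ*(ρ/2) := by
      simp only [hδdef]; nlinarith [mul_pos h0 (mul_pos hρ0 hρ0)]
    exact le_trans q2 q1
  obtain ⟨N, hNfin, hNne, hNsub, hNnet⟩ := net_exists aa b (δ/2) (by positivity)
    (by simp only [haadef]; linarith)
  refine ⟨⟨⟨(L : Set ℝ) ∪ N, L.isCompact.union hNfin.isCompact⟩,
    L.nonempty.mono Set.subset_union_left⟩, ?_, ?_, ?_⟩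
  · exact Set.union_subset hL (hNsub.trans (Set.Icc_subset_Icc haa0.le hb1))
  · have hdist : hausdorffDist ((L : Set ℝ) ∪ N) (L : Set ℝ) ≤ 2*ρ := by
      apply hausdorffDist_le_of_mem_dist (by linarith)
      · rintro x (hx | hx)
        · exact ⟨x, hx, by rw [dist_self]; linarith⟩
        · refine ⟨b0, hb0mem, ?_⟩
          have := hNsub hx
          rw [Real.dist_eq, abs_le]
          have h1' := this.1
          have h2' := this.2
          constructor
          · simp only [haadef] at h1'; linarith
          · simp only [haadef] at h1'; linarith
      · intro y hy
        exact ⟨y, Or.inl hy, by rw [dist_self]; linarith⟩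
    have : dist (⟨⟨(L : Set ℝ) ∪ N, L.isCompact.union hNfin.isCompact⟩,
        L.nonempty.mono Set.subset_union_left⟩ : NonemptyCompacts ℝ) L =
        hausdorffDist ((L : Set ℝ) ∪ N) (L : Set ℝ) := NonemptyCompacts.dist_eq
    rw [this]
    linarith
  · refine ⟨aa, b, δ, δ/2, haa0, hδ0, hc1, hc2, by linarith, by linarith, ?_⟩
    intro x hx
    obtain ⟨p, hpN, hpd⟩ := hNnet x hx
    calc infDist x ((L : Set ℝ) ∪ N) ≤ dist x p := infDist_le_dist_of_mem (Or.inr hpN)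
    _ ≤ δ/2 := hpd

theorem geometric_series_meager (lam : ℝ) (h0 : 0 < lam) (h1 : lam < 1) :
    (∀ x ∈ Set.Icc (0 : ℝ) 1, Summable (fun i : ℕ => |lam ^ i * x ^ i|)) ∧
    IsMeagre {K : KIcc |
      ∃ F : Set ℝ, IsCompact F ∧ F.Nonempty ∧
        Filter.Tendsto
          (fun n => Metric.hausdorffDist
            (∑ i ∈ Finset.range n, lam ^ i • ((K.1 : Set ℝ) ^ i)) F)
          Filter.atTop (nhds 0) ∧
        interior F = ∅} := by
  constructor
  · intro x hx
    have heq : (fun i : ℕ => |lam ^ i * x ^ i|) = fun i : ℕ => |lam * x| ^ i := by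
      funext i; rw [← mul_pow, abs_pow]
    rw [heq]
    apply summable_geometric_of_lt_one (abs_nonneg _)
    rw [abs_of_nonneg (mul_nonneg h0.le hx.1)]
    nlinarith [hx.2]
  · have hsub : {K : KIcc |
        ∃ F : Set ℝ, IsCompact F ∧ F.Nonempty ∧
          Filter.Tendsto
            (fun n => Metric.hausdorffDist
              (∑ i ∈ Finset.range n, lam ^ i • ((K.1 : Set ℝ) ^ i)) F)
            Filter.atTop (nhds 0) ∧
          interior F = ∅} ⊆ (Subtype.val ⁻¹' Vset lam)ᶜ := by
      rintro K ⟨F, hFc, hFne, hT, hFi⟩ hKV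
      obtain ⟨a, b, δ, δ', ha, hδ, hab, hkey, hδ'0, hδ', hd⟩ := hKV
      have hdense : ∀ x ∈ Set.Icc a b, ∃ k ∈ (K.1 : Set ℝ), dist x k ≤ δ := by
        intro x hx
        obtain ⟨k, hk, hkd⟩ := (infDist_lt_iff K.1.nonempty).mp
          (lt_of_le_of_lt (hd x hx) hδ')
        exact ⟨k, hk, hkd.le⟩
      have := core lam h0 h1 (K.1 : Set ℝ) K.2 a b δ ha hδ hab hkey hdense F hFc hFne hT
      rw [hFi] at this
      exact Set.not_nonempty_empty this
    have hopen : IsOpen (Subtype.val ⁻¹' Vset lam : Set KIcc) :=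
      (Vopen lam).preimage continuous_subtype_val
    have hdense : Dense (Subtype.val ⁻¹' Vset lam : Set KIcc) := by
      rw [dense_iff_inter_open]
      rintro U hU ⟨K, hKU⟩
      obtain ⟨U', hU', hpre⟩ := isOpen_induced_iff.mp hU
      have hKU' : K.1 ∈ U' := by rw [← hpre] at hKU; exact hKU
      obtain ⟨ε, hε, hball⟩ := Metric.isOpen_iff.mp hU' K.1 hKU'
      obtain ⟨L', hL'sub, hL'dist, hL'V⟩ := dense_step lam h0 h1 K.1 K.2 ε hε
      refine ⟨⟨L', hL'sub⟩, ?_, hL'V⟩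
      rw [← hpre]
      exact hball (Metric.mem_ball.mpr hL'dist)
    have hmeagre : IsMeagre ((Subtype.val ⁻¹' Vset lam : Set KIcc)ᶜ) := by
      rw [IsMeagre, compl_compl]
      exact residual_of_dense_open hopen hdense
    exact hmeagre.mono hsub
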